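/- Let v : [0,1]^m → ℝ≥0 be a linear valuation function, i.e., v(x) = Σ_{j=1}^m v_j x_j with v_j ≥ 0, and let b ∈ ℝ≥0 ∪ {∞} be a budget. Let p : [0,1]^m → ℝ≥0 be an MLC pricing function and let p̂ = conv(p). Then r(p̂|v,b) ≥ r(p|v,b). -/

import Mathlib

noncomputable section

/-- The unit cube `[0,1]^m` in `Fin m → ℝ`. -/
def cube (m : ℕ) : Set (Fin m → ℝ) := Set.Icc 0 1

/-- The lower limit of `f` at `x₀` relative to the domain `D` (in the extended reals). -/
def lowerLim {E : Type*} [SeminormedAddCommGroup E] (D : Set E) (f : E → ℝ) (x₀ : E) : EReal :=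
  ⨆ δ : {δ : ℝ // 0 < δ}, ⨅ x : {x : E // x ∈ D ∧ ‖x - x₀‖ ≤ δ.1}, (f x.1 : EReal)

/-- `f` is lower-continuous on `D`. -/
def LowerContOn {E : Type*} [SeminormedAddCommGroup E] (D : Set E) (f : E → ℝ) : Prop :=
  ∀ x₀ ∈ D, lowerLim D f x₀ = (f x₀ : EReal)

/-- The epigraph of `f` relative to the domain `D`. -/
def epigraph {E : Type*} (D : Set E) (f : E → ℝ) : Set (E × ℝ) :=
  {q | q.1 ∈ D ∧ f q.1 ≤ q.2}

/-- The convex hull of a function: `conv(f)(x) = inf {y : (x,y) ∈ conv(epi f)}`. -/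
def funConvHull {E : Type*} [AddCommGroup E] [Module ℝ E] (D : Set E) (f : E → ℝ) : E → ℝ :=
  fun x => sInf {y : ℝ | (x, y) ∈ convexHull ℝ (epigraph D f)}

/-- The affordable set `F(p|b)`; the budget `b` lives in the extended reals
(`b = ⊤` means an infinite budget). -/
def afford {E : Type*} (D : Set E) (p : E → ℝ) (b : EReal) : Set E :=
  {x ∈ D | (p x : EReal) ≤ b}

/-- The maximum net utility `u*(p|v,b)`. -/
def uStar {E : Type*} (D : Set E) (p v : E → ℝ) (b : EReal) : ℝ :=
  ⨆ x : afford D p b, (v x.1 - p x.1)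

/-- The demand set `Dem(p|v,b)`. -/
def demand {E : Type*} (D : Set E) (p v : E → ℝ) (b : EReal) : Set E :=
  {x ∈ afford D p b | v x - p x = uStar D p v b}

/-- The revenue `r(p|v,b)`. -/
def revenue {E : Type*} (D : Set E) (p v : E → ℝ) (b : EReal) : ℝ :=
  ⨆ x : demand D p v b, p x.1

/-! ### Auxiliary lemmas -/

open Module in
/-- The convex hull of a compact set in a finite-dimensional normed real vector space
is compact. -/
theorem aux_isCompact_convexHull {E : Type*} [NormedAddCommGroup E] [NormedSpace ℝ E]
    [FiniteDimensional ℝ E] {K : Set E} (hK : IsCompact K) :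
    IsCompact (convexHull ℝ K) := by
  rcases K.eq_empty_or_nonempty with rfl | ⟨x₀, hx₀⟩
  · simp
  set n := finrank ℝ E + 1 with hn
  have hdom : IsCompact ((stdSimplex ℝ (Fin n)) ×ˢ (Set.univ.pi fun _ : Fin n => K)) :=
    (isCompact_stdSimplex ℝ (Fin n)).prod (isCompact_univ_pi fun _ => hK)
  have hcont : Continuous fun q : (Fin n → ℝ) × (Fin n → E) => ∑ i, q.1 i • q.2 i :=
    continuous_finset_sum _ fun i _ =>
      ((continuous_apply i).comp continuous_fst).smul ((continuous_apply i).comp continuous_snd)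
  have himg : (fun q : (Fin n → ℝ) × (Fin n → E) => ∑ i, q.1 i • q.2 i) ''
      ((stdSimplex ℝ (Fin n)) ×ˢ (Set.univ.pi fun _ : Fin n => K)) = convexHull ℝ K := by
    apply Set.Subset.antisymm
    · rintro x ⟨⟨w, z⟩, ⟨hw, hz⟩, rfl⟩
      simp only at hw hz ⊢
      rw [← Finset.centerMass_eq_of_sum_1 Finset.univ z hw.2]
      exact Finset.centerMass_mem_convexHull _ (fun i _ => hw.1 i) (by rw [hw.2]; norm_num)
        (fun i _ => hz i (Set.mem_univ i))
    · intro x hx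
      rw [convexHull_eq_union] at hx
      simp only [Set.mem_iUnion] at hx
      obtain ⟨t, hts, hai, hxt⟩ := hx
      have hcard : t.card ≤ n := by
        have h1 := hai.card_le_finrank_succ
        rw [Fintype.card_coe] at h1
        have h2 : finrank ℝ ↥(vectorSpan ℝ (Set.range ((↑) : t → E))) ≤ finrank ℝ E :=
          Submodule.finrank_le _
        omega
      rw [Finset.convexHull_eq] at hxt
      obtain ⟨w, hw0, hw1, hwx⟩ := hxt
      set e := t.equivFin with he
      set wfun : ℕ → ℝ := fun i => if h : i < t.card then w (e.symm ⟨i, h⟩) else 0 with hwfun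
      set zfun : ℕ → E := fun i => if h : i < t.card then (e.symm ⟨i, h⟩ : E) else x₀ with hzfun
      have key : ∑ i : Fin n, ((wfun ↑i • zfun ↑i, wfun ↑i) : E × ℝ)
          = ∑ y : t, ((w ↑y • (↑y : E), w ↑y) : E × ℝ) := by
        set f : ℝ → E → E × ℝ := fun a y => (a • y, a) with hf
        show ∑ i : Fin n, f (wfun ↑i) (zfun ↑i) = ∑ y : t, f (w ↑y) (↑y : E)
        rw [Fin.sum_univ_eq_sum_range (fun i => f (wfun i) (zfun i)) n,
          ← Finset.sum_subset (Finset.range_subset_range.2 hcard)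
            (fun i _ hi => by
              simp only [Finset.mem_range, not_lt] at hi
              simp [hf, hwfun, hzfun, dif_neg (not_lt.2 hi)]),
          ← Fin.sum_univ_eq_sum_range (fun i => f (wfun i) (zfun i)) t.card,
          ← Equiv.sum_comp e.symm (fun y => f (w ↑y) (↑y : E))]
        apply Finset.sum_congr rfl
        intro i _
        simp only [hwfun, hzfun, dif_pos i.isLt]
      have hsum1 : ∑ i : Fin n, wfun ↑i = 1 := by
        have := congrArg Prod.snd key
        simp only [Prod.snd_sum] at this
        rw [this, Finset.sum_coe_sort t (fun y => w y)]
        exact hw1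
      have hsumx : ∑ i : Fin n, wfun ↑i • zfun ↑i = x := by
        have h2 := congrArg Prod.fst key
        simp only [Prod.fst_sum] at h2
        rw [h2, Finset.sum_coe_sort t (fun y => w y • y)]
        rw [Finset.centerMass_eq_of_sum_1 t id hw1] at hwx
        simpa using hwx
      refine ⟨(fun i => wfun ↑i, fun i => zfun ↑i), ⟨⟨fun i => ?_, hsum1⟩, fun i _ => ?_⟩, hsumx⟩
      · by_cases h : (i : ℕ) < t.card
        · simp only [hwfun, dif_pos h]; exact hw0 _ (Finset.coe_mem _)
        · simp [hwfun, dif_neg h]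
      · by_cases h : (i : ℕ) < t.card
        · simp only [hzfun, dif_pos h]; exact hts (Finset.coe_mem _)
        · simp [hzfun, dif_neg h, hx₀]
  exact himg ▸ hdom.image hcont

/-- The epigraph of a lower-continuous function on the cube is closed. -/
theorem aux_epigraph_closed (m : ℕ) (p : (Fin m → ℝ) → ℝ) (hp_lc : LowerContOn (cube m) p) :
    IsClosed (epigraph (cube m) p) := by
  apply IsSeqClosed.isClosed
  intro q Q hq hQ
  have hQ1 : Filter.Tendsto (fun n => (q n).1) Filter.atTop (nhds Q.1) :=
    (continuous_fst.tendsto Q).comp hQ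
  have hQ2 : Filter.Tendsto (fun n => (q n).2) Filter.atTop (nhds Q.2) :=
    (continuous_snd.tendsto Q).comp hQ
  have hQ1mem : Q.1 ∈ cube m :=
    isClosed_Icc.mem_of_tendsto hQ1 (Filter.Eventually.of_forall fun n => (hq n).1)
  refine ⟨hQ1mem, ?_⟩
  have hlc := hp_lc Q.1 hQ1mem
  have h : lowerLim (cube m) p Q.1 ≤ (Q.2 : EReal) := by
    apply iSup_le
    rintro ⟨δ, hδ⟩
    have hnorm : Filter.Tendsto (fun n => ‖(q n).1 - Q.1‖) Filter.atTop (nhds 0) := by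
      rw [← tendsto_iff_norm_sub_tendsto_zero]; exact hQ1
    have hev : ∀ᶠ n in Filter.atTop, ‖(q n).1 - Q.1‖ ≤ δ :=
      hnorm.eventually_le_const hδ
    refine ge_of_tendsto (EReal.tendsto_coe.2 hQ2) ?_
    filter_upwards [hev] with n hn
    exact le_trans (iInf_le _ ⟨(q n).1, (hq n).1, hn⟩) (EReal.coe_le_coe_iff.2 (hq n).2)
  rw [hlc] at h
  exact_mod_cast h

/-- For a linear valuation `v x = ∑ j, vcoef j * x j` with nonnegative
coefficients, a budget `b ∈ ℝ≥0 ∪ {∞}`, and an MLC pricing function `p` on `[0,1]^m`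
with convex hull `p̂ = conv p`, we have `r(p̂|v,b) ≥ r(p|v,b)`. -/
theorem stmt5 (m : ℕ) (vcoef : Fin m → ℝ) (hv : ∀ j, 0 ≤ vcoef j) (b : EReal) (hb : 0 ≤ b)
    (p : (Fin m → ℝ) → ℝ) (hp_nonneg : ∀ x ∈ cube m, 0 ≤ p x) (hp0 : p 0 = 0)
    (hp_mono : MonotoneOn p (cube m)) (hp_lc : LowerContOn (cube m) p) :
    revenue (cube m) (funConvHull (cube m) p) (fun x => ∑ j, vcoef j * x j) b ≥
      revenue (cube m) p (fun x => ∑ j, vcoef j * x j) b := by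
  classical
  set V : (Fin m → ℝ) → ℝ := fun x => ∑ j, vcoef j * x j with hV
  set ph : (Fin m → ℝ) → ℝ := funConvHull (cube m) p with hph
  set P : ℝ := p 1 with hP
  set K : Set ((Fin m → ℝ) × ℝ) := epigraph (cube m) p ∩ ((cube m) ×ˢ Set.Icc 0 P) with hK
  set CH : Set ((Fin m → ℝ) × ℝ) := convexHull ℝ (epigraph (cube m) p) with hCH
  set CK : Set ((Fin m → ℝ) × ℝ) := convexHull ℝ K with hCK
  -- basic facts about the cube
  have h0cube : (0 : Fin m → ℝ) ∈ cube m := Set.mem_Icc.2 ⟨le_refl _, zero_le_one⟩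
  have h1cube : (1 : Fin m → ℝ) ∈ cube m := Set.mem_Icc.2 ⟨zero_le_one, le_refl _⟩
  have hcc : Convex ℝ (cube m) := convex_Icc 0 1
  have hpP : ∀ x ∈ cube m, p x ≤ P := fun x hx => hp_mono hx h1cube hx.2
  -- linearity of V
  have hVsum : ∀ {ι : Type} (t : Finset ι) (w : ι → ℝ) (z : ι → (Fin m → ℝ)),
      V (∑ i ∈ t, w i • z i) = ∑ i ∈ t, w i * V (z i) := by
    intro ι t w z
    simp only [hV, Finset.sum_apply, Pi.smul_apply, smul_eq_mul, Finset.mul_sum]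
    rw [Finset.sum_comm]
    exact Finset.sum_congr rfl fun i _ => Finset.sum_congr rfl fun j _ => by ring
  have hV2 : ∀ (a c : ℝ) (x y : Fin m → ℝ),
      V (a • x + c • y) = a * V x + c * V y := by
    intro a c x y
    simp only [hV, Pi.add_apply, Pi.smul_apply, smul_eq_mul, mul_add, Finset.sum_add_distrib,
      Finset.mul_sum]
    congr 1 <;> exact Finset.sum_congr rfl fun j _ => by ring
  set Vmax : ℝ := ∑ j, vcoef j with hVmax
  have hVle : ∀ x ∈ cube m, V x ≤ Vmax := by
    intro x hx
    refine Finset.sum_le_sum fun j _ => ?_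
    have hxj : x j ≤ 1 := by
      have := hx.2
      exact this j
    nlinarith [hv j, hxj]
  -- the truncated epigraph and convex hulls
  have hKsub : K ⊆ epigraph (cube m) p := Set.inter_subset_left
  have hCKsub : CK ⊆ CH := convexHull_mono hKsub
  have hsub1 : CH ⊆ (cube m) ×ˢ Set.Ici (0 : ℝ) := by
    apply convexHull_min
    · rintro ⟨x, y⟩ ⟨hx, hy⟩
      exact ⟨hx, (hp_nonneg x hx).trans hy⟩
    · exact hcc.prod (convex_Ici 0)
  have hsub2 : CK ⊆ (cube m) ×ˢ Set.Icc 0 P := by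
    apply convexHull_min Set.inter_subset_right (hcc.prod (convex_Icc 0 P))
  have hmemK : ∀ x ∈ cube m, (x, p x) ∈ K := by
    intro x hx
    exact ⟨⟨hx, le_refl _⟩, ⟨hx, ⟨hp_nonneg x hx, hpP x hx⟩⟩⟩
  -- compactness
  have hKcompact : IsCompact K := by
    have hclosed : IsClosed K :=
      (aux_epigraph_closed m p hp_lc).inter ((isClosed_Icc).prod isClosed_Icc)
    exact (isCompact_Icc.prod isCompact_Icc).of_isClosed_subset hclosed
      Set.inter_subset_right
  have hCKcompact : IsCompact CK := aux_isCompact_convexHull hKcompact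
  -- bddBelow of the slices of CH
  have hBdd : ∀ x : Fin m → ℝ, BddBelow {y : ℝ | (x, y) ∈ CH} :=
    fun x => ⟨0, fun y hy => (hsub1 hy).2⟩
  have hBle : ∀ (x : Fin m → ℝ) (y : ℝ), (x, y) ∈ CH → ph x ≤ y :=
    fun x y h => csInf_le (hBdd x) h
  -- Lemma A : the infimum is attained within CK
  have hA : ∀ x ∈ cube m, (x, ph x) ∈ CK := by
    intro x hx
    have hSne : (x, p x) ∈ CK := subset_convexHull ℝ K (hmemK x hx)
    have hSclosed : IsClosed {y : ℝ | (x, y) ∈ CK} :=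
      IsClosed.preimage (Continuous.prodMk_right x) hCKcompact.isClosed
    have hSbdd : BddBelow {y : ℝ | (x, y) ∈ CK} := ⟨0, fun y hy => (hsub2 hy).2.1⟩
    set y₀ : ℝ := sInf {y : ℝ | (x, y) ∈ CK} with hy₀def
    have hy₀ : (x, y₀) ∈ CK := hSclosed.csInf_mem ⟨p x, hSne⟩ hSbdd
    have hy₀T : (x, y₀) ∈ CH := hCKsub hy₀
    have hlow : ∀ y ∈ {y : ℝ | (x, y) ∈ CH}, y₀ ≤ y := by
      intro y hy
      rw [hCH, convexHull_eq] at hy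
      obtain ⟨ι, t, wts, z, hw0, hw1, hzmem, hcm⟩ := hy
      rw [Finset.centerMass_eq_of_sum_1 _ _ hw1] at hcm
      have hz'K : ∀ i ∈ t, (((z i).1, min (z i).2 P) : (Fin m → ℝ) × ℝ) ∈ K := by
        intro i hi
        obtain ⟨hz1, hz2⟩ := hzmem i hi
        refine ⟨⟨hz1, le_min hz2 (hpP _ hz1)⟩, ⟨hz1, ⟨le_min ((hp_nonneg _ hz1).trans hz2)
          (hp_nonneg _ hz1 |>.trans (hpP _ hz1)), min_le_right _ _⟩⟩⟩
      have hy' : (x, ∑ i ∈ t, wts i * min (z i).2 P) ∈ CK := by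
        have hmem := Finset.centerMass_mem_convexHull t hw0 (by rw [hw1]; norm_num)
          (fun i hi => hz'K i hi)
        rw [Finset.centerMass_eq_of_sum_1 _ _ hw1] at hmem
        have heq : (∑ i ∈ t, wts i • (((z i).1, min (z i).2 P) : (Fin m → ℝ) × ℝ))
            = (x, ∑ i ∈ t, wts i * min (z i).2 P) := by
          apply Prod.ext
          · rw [Prod.fst_sum]
            have := congrArg Prod.fst hcm
            rw [Prod.fst_sum] at this
            simpa using this
          · rw [Prod.snd_sum]
            simp [smul_eq_mul]
        rw [heq] at hmem
        exact hmem
      have h1 : y₀ ≤ ∑ i ∈ t, wts i * min (z i).2 P := csInf_le hSbdd hy'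
      have h2 : ∑ i ∈ t, wts i * min (z i).2 P ≤ y := by
        have hysum : y = ∑ i ∈ t, wts i * (z i).2 := by
          have := congrArg Prod.snd hcm
          rw [Prod.snd_sum] at this
          simp only [Prod.snd_sum, smul_eq_mul] at this ⊢
          exact this.symm
        rw [hysum]
        exact Finset.sum_le_sum fun i hi =>
          mul_le_mul_of_nonneg_left (min_le_left _ _) (hw0 i hi)
      linarith
    have heq : ph x = y₀ := by
      refine le_antisymm (csInf_le (hBdd x) hy₀T) (le_csInf ⟨y₀, hy₀T⟩ hlow)
    rw [heq]
    exact hy₀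
  -- consequences
  have hple : ∀ x ∈ cube m, ph x ≤ p x :=
    fun x hx => hBle x (p x) (subset_convexHull ℝ _ ⟨hx, le_refl _⟩)
  have hpnn : ∀ x ∈ cube m, 0 ≤ ph x := fun x hx => (hsub2 (hA x hx)).2.1
  have hph0 : ph 0 = 0 := le_antisymm (hp0 ▸ hple 0 h0cube) (hpnn 0 h0cube)
  -- the maximizer over the budget-constrained hull
  have hGcont : Continuous fun q : (Fin m → ℝ) × ℝ => V q.1 - q.2 := by
    apply Continuous.sub _ continuous_snd
    apply continuous_finset_sum
    intro j _
    exact continuous_const.mul ((continuous_apply j).comp continuous_fst)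
  have hbclosed : IsClosed {q : (Fin m → ℝ) × ℝ | (q.2 : EReal) ≤ b} := by
    have : {q : (Fin m → ℝ) × ℝ | (q.2 : EReal) ≤ b}
        = (fun q : (Fin m → ℝ) × ℝ => (q.2 : EReal)) ⁻¹' Set.Iic b := rfl
    rw [this]
    exact IsClosed.preimage (continuous_coe_real_ereal.comp continuous_snd) isClosed_Iic
  set Cb : Set ((Fin m → ℝ) × ℝ) := CK ∩ {q | (q.2 : EReal) ≤ b} with hCb
  have hCbcompact : IsCompact Cb := hCKcompact.inter_right hbclosed
  have hCbne : ((0 : Fin m → ℝ), (0 : ℝ)) ∈ Cb := by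
    constructor
    · have := hmemK 0 h0cube
      rw [hp0] at this
      exact subset_convexHull ℝ K this
    · simpa using hb
  obtain ⟨⟨xt, yt⟩, hxtmem, hmax⟩ :=
    hCbcompact.exists_isMaxOn ⟨_, hCbne⟩ hGcont.continuousOn
  have hxtCK : (xt, yt) ∈ CK := hxtmem.1
  have hytb : ((yt : ℝ) : EReal) ≤ b := hxtmem.2
  have hxtcube : xt ∈ cube m := (hsub2 hxtCK).1
  have hphxt_le : ph xt ≤ yt := hBle xt yt (hCKsub hxtCK)
  -- uStar for ph
  have h0affph : (0 : Fin m → ℝ) ∈ afford (cube m) ph b := by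
    refine ⟨h0cube, ?_⟩
    rw [hph0]
    simpa using hb
  haveI : Nonempty (afford (cube m) ph b) := ⟨⟨0, h0affph⟩⟩
  have hBddUph : BddAbove (Set.range fun x : afford (cube m) ph b => V x.1 - ph x.1) := by
    refine ⟨Vmax, ?_⟩
    rintro y ⟨⟨x, hx⟩, rfl⟩
    have h1 : V x ≤ Vmax := hVle x hx.1
    have h2 : 0 ≤ ph x := hpnn x hx.1
    simp only
    linarith
  set u' : ℝ := uStar (cube m) ph V b with hu'
  have hu'ub : ∀ x ∈ afford (cube m) ph b, V x - ph x ≤ u' :=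
    fun x hx => le_ciSup hBddUph ⟨x, hx⟩
  have step1 : u' ≤ V xt - yt := by
    apply ciSup_le
    rintro ⟨x, hx⟩
    have hxCK : (x, ph x) ∈ CK := hA x hx.1
    have hxCb : ((x, ph x) : (Fin m → ℝ) × ℝ) ∈ Cb := ⟨hxCK, hx.2⟩
    exact hmax hxCb
  have hxtaff : xt ∈ afford (cube m) ph b := by
    refine ⟨hxtcube, ?_⟩
    exact le_trans (EReal.coe_le_coe_iff.2 hphxt_le) hytb
  have step2 : V xt - yt ≤ u' := by
    have h1 : V xt - yt ≤ V xt - ph xt := by linarith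
    exact h1.trans (hu'ub xt hxtaff)
  have hu'eq : u' = V xt - yt := le_antisymm step1 step2
  have hphxt : ph xt = yt := by
    have h1 : V xt - ph xt ≤ u' := hu'ub xt hxtaff
    rw [hu'eq] at h1
    linarith [hphxt_le]
  have hxtdem : xt ∈ demand (cube m) ph V b := by
    refine ⟨hxtaff, ?_⟩
    rw [hphxt, ← hu'eq]
  -- bounds on revenue of ph
  have hrevBdd : BddAbove (Set.range fun x : demand (cube m) ph V b => ph x.1) := by
    refine ⟨P, ?_⟩
    rintro y ⟨⟨x, hx⟩, rfl⟩
    exact (hple x hx.1.1).trans (hpP x hx.1.1)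
  have hrev_ge : ∀ x ∈ demand (cube m) ph V b, ph x ≤ revenue (cube m) ph V b :=
    fun x hx => le_ciSup hrevBdd ⟨x, hx⟩
  have hrev_nonneg : 0 ≤ revenue (cube m) ph V b :=
    Real.iSup_nonneg fun x => hpnn x.1 x.2.1.1
  -- main argument
  rw [ge_iff_le]
  show revenue (cube m) p V b ≤ revenue (cube m) ph V b
  apply Real.iSup_le _ hrev_nonneg
  rintro ⟨xs, hxsdem⟩
  obtain ⟨⟨hxscube, hpxsb⟩, hxsu⟩ := hxsdem
  show p xs ≤ revenue (cube m) ph V b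
  -- decompose the maximizer
  rw [hCK, convexHull_eq] at hxtCK
  obtain ⟨ι, t, wts, z, hw0, hw1, hzK, hcm⟩ := hxtCK
  rw [Finset.centerMass_eq_of_sum_1 _ _ hw1] at hcm
  have hxteq : xt = ∑ i ∈ t, wts i • (z i).1 := by
    have := congrArg Prod.fst hcm
    rw [Prod.fst_sum] at this
    exact this.symm
  have hyteq : yt = ∑ i ∈ t, wts i * (z i).2 := by
    have := congrArg Prod.snd hcm
    rw [Prod.snd_sum] at this
    simp only [smul_eq_mul] at this
    exact this.symm
  have htne : t.Nonempty := by
    rcases Finset.eq_empty_or_nonempty t with rfl | h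
    · simp at hw1
    · exact h
  obtain ⟨i₀, hi₀t, hi₀max⟩ :=
    Finset.exists_max_image t (fun i => V (z i).1 - p (z i).1) htne
  have hzcube : ∀ i ∈ t, (z i).1 ∈ cube m := fun i hi => (hzK i hi).1.1
  have hzle : ∀ i ∈ t, p (z i).1 ≤ (z i).2 := fun i hi => (hzK i hi).1.2
  -- u' ≤ c i₀
  have hMle : u' ≤ V (z i₀).1 - p (z i₀).1 := by
    have h1 : V xt = ∑ i ∈ t, wts i * V (z i).1 := by rw [hxteq, hVsum]
    have h2 : V xt - yt = ∑ i ∈ t, wts i * (V (z i).1 - (z i).2) := by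
      rw [h1, hyteq, ← Finset.sum_sub_distrib]
      exact Finset.sum_congr rfl fun i _ => by ring
    have h3 : ∑ i ∈ t, wts i * (V (z i).1 - (z i).2)
        ≤ ∑ i ∈ t, wts i * (V (z i₀).1 - p (z i₀).1) := by
      apply Finset.sum_le_sum
      intro i hi
      apply mul_le_mul_of_nonneg_left _ (hw0 i hi)
      have := hi₀max i hi
      have := hzle i hi
      linarith
    have h4 : ∑ i ∈ t, wts i * (V (z i₀).1 - p (z i₀).1) = V (z i₀).1 - p (z i₀).1 := by
      rw [← Finset.sum_mul, hw1, one_mul]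
    rw [hu'eq, h2]
    linarith
  have hi₀cube : (z i₀).1 ∈ cube m := hzcube i₀ hi₀t
  by_cases hcase : ((p (z i₀).1 : ℝ) : EReal) ≤ b
  · -- Case A : the best point in the decomposition is affordable under p
    have hi₀aff : (z i₀).1 ∈ afford (cube m) p b := ⟨hi₀cube, hcase⟩
    haveI : Nonempty (afford (cube m) p b) := ⟨⟨(z i₀).1, hi₀aff⟩⟩
    have hBddUp : BddAbove (Set.range fun x : afford (cube m) p b => V x.1 - p x.1) := by
      refine ⟨Vmax, ?_⟩
      rintro y ⟨⟨x, hx⟩, rfl⟩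
      have h1 : V x ≤ Vmax := hVle x hx.1
      have h2 : 0 ≤ p x := hp_nonneg x hx.1
      simp only
      linarith
    have hc_le_u : V (z i₀).1 - p (z i₀).1 ≤ uStar (cube m) p V b :=
      le_ciSup hBddUp ⟨(z i₀).1, hi₀aff⟩
    have hxsaffph : xs ∈ afford (cube m) ph b :=
      ⟨hxscube, le_trans (EReal.coe_le_coe_iff.2 (hple xs hxscube)) hpxsb⟩
    have hchain1 : V xs - ph xs ≤ u' := hu'ub xs hxsaffph
    have hchain2 : u' ≤ V xs - p xs := by
      calc u' ≤ V (z i₀).1 - p (z i₀).1 := hMle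
        _ ≤ uStar (cube m) p V b := hc_le_u
        _ = V xs - p xs := hxsu.symm
    have hpheq : ph xs = p xs := by
      have := hple xs hxscube
      linarith
    have hxsdemph : xs ∈ demand (cube m) ph V b := by
      refine ⟨hxsaffph, ?_⟩
      show V xs - ph xs = u'
      linarith
    calc p xs = ph xs := hpheq.symm
      _ ≤ revenue (cube m) ph V b := hrev_ge xs hxsdemph
  · -- Case B : the best point is not affordable, so the budget is binding
    push_neg at hcase
    have hbne_top : b ≠ ⊤ := (hcase.trans (EReal.coe_lt_top _)).ne
    have hbne_bot : b ≠ ⊥ := by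
      intro h
      rw [h] at hb
      simp at hb
    set B : ℝ := b.toReal with hB
    have hbB : (B : EReal) = b := EReal.coe_toReal hbne_top hbne_bot
    have hBnn : 0 ≤ B := by
      rw [← EReal.coe_le_coe_iff (x := 0) (y := B)]
      rw [hbB]
      exact_mod_cast hb
    have hpB : B < p (z i₀).1 := by
      rw [← EReal.coe_lt_coe_iff, hbB]
      exact hcase
    have hphxtB : ph xt ≤ B := by
      rw [← EReal.coe_le_coe_iff, hbB, hphxt]
      exact hytb
    have hd : 0 < p (z i₀).1 - ph xt := by linarith
    set s : ℝ := (B - ph xt) / (p (z i₀).1 - ph xt) with hs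
    have hs0 : 0 ≤ s := div_nonneg (by linarith) (le_of_lt hd)
    have hs1 : s ≤ 1 := by
      rw [hs, div_le_one hd]
      linarith
    have hsd : s * (p (z i₀).1 - ph xt) = B - ph xt := div_mul_cancel₀ _ (ne_of_gt hd)
    set w : Fin m → ℝ := (1 - s) • xt + s • (z i₀).1 with hw
    have hwB : ((1 - s) • ((xt, ph xt) : (Fin m → ℝ) × ℝ)
        + s • ((z i₀).1, p (z i₀).1)) = (w, B) := by
      apply Prod.ext
      · simp [hw, Prod.smul_fst]
      · simp only [Prod.smul_snd, Prod.snd_add, smul_eq_mul]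
        linarith [hsd]
    have hwCH : (w, B) ∈ CH := by
      rw [← hwB]
      have hm1 : ((xt, ph xt) : (Fin m → ℝ) × ℝ) ∈ CH := by
        rw [hphxt]
        apply hCKsub
        rw [hCK, convexHull_eq]
        exact ⟨ι, t, wts, z, hw0, hw1, hzK, by
          rw [Finset.centerMass_eq_of_sum_1 _ _ hw1]; exact hcm⟩
      have hm2 : (((z i₀).1, p (z i₀).1) : (Fin m → ℝ) × ℝ) ∈ CH :=
        subset_convexHull ℝ _ ⟨hi₀cube, le_refl _⟩
      exact (convex_convexHull ℝ _) hm1 hm2 (by linarith) hs0 (by ring)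
    have hwcube : w ∈ cube m := (hsub1 hwCH).1
    have hphw_le : ph w ≤ B := hBle w B hwCH
    have hwaff : w ∈ afford (cube m) ph b := by
      refine ⟨hwcube, ?_⟩
      rw [← hbB]
      exact EReal.coe_le_coe_iff.2 hphw_le
    have hVw : V w = (1 - s) * V xt + s * V (z i₀).1 := hV2 _ _ _ _
    have hw_util : V w - ph w ≤ u' := hu'ub w hwaff
    have hu'xt : u' = V xt - ph xt := by rw [hu'eq, hphxt]
    -- ph w = B
    have hsnd : (1 - s) * ph xt + s * p (z i₀).1 = B := by linarith [hsd]
    have hprod : 0 ≤ s * (V (z i₀).1 - p (z i₀).1 - u') :=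
      mul_nonneg hs0 (by linarith [hMle])
    have hsu : s * u' = s * V xt - s * ph xt := by rw [hu'xt]; ring
    have hphwB : ph w = B := by
      have hlb : B ≤ ph w := by linarith [hw_util, hVw, hu'xt, hsnd, hprod, hsu]
      linarith
    have hw_util_eq : V w - ph w = u' := by
      have hge : u' ≤ V w - ph w := by
        rw [hphwB]
        linarith [hVw, hu'xt, hsnd, hprod, hsu]
      linarith
    have hwdem : w ∈ demand (cube m) ph V b := ⟨hwaff, hw_util_eq⟩
    have hpxsB : p xs ≤ B := by
      rw [← EReal.coe_le_coe_iff, hbB]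
      exact hpxsb
    calc p xs ≤ B := hpxsB
      _ = ph w := hphwB.symm
      _ ≤ revenue (cube m) ph V b := hrev_ge w hwdem

end
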